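/- Let P be a set of n points in R^d, d ≥ 2, and suppose that for every n-point set in R^{d−1} there exists a Tverberg point of depth ⌈n/2^{d−1}⌉. Then P has a Tverberg point of depth at least ⌈n/2^d⌉, obtained by projecting P onto the hyperplane x_d = 0, taking a Tverberg point for the projection, and applying the lifting lemma; here one uses ⌈⌈n/2^{d−1}⌉/2⌉ ≥ ⌈n/2^d⌉. -/

import Mathlib

noncomputable def projMap (e : ℕ) (w : Fin e → ℝ) :
    EuclideanSpace ℝ (Fin (e + 1)) →ₗ[ℝ] EuclideanSpace ℝ (Fin e) where
  toFun x := WithLp.toLp 2 (fun i => x i.castSucc - w i * x (Fin.last e))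
  map_add' x y := by
    ext i
    simp only [PiLp.add_apply, PiLp.toLp_apply]
    ring
  map_smul' a x := by
    ext i
    simp only [PiLp.toLp_apply, PiLp.smul_apply, smul_eq_mul, RingHom.id_apply]
    ring

lemma projMap_apply (e : ℕ) (w : Fin e → ℝ) (x : EuclideanSpace ℝ (Fin (e + 1))) (i : Fin e) :
    projMap e w x i = x i.castSucc - w i * x (Fin.last e) := rfl

lemma proj_eq_last (e : ℕ) (w : Fin e → ℝ) {x y : EuclideanSpace ℝ (Fin (e + 1))}
    (h : projMap e w x = projMap e w y) (hl : x (Fin.last e) = y (Fin.last e)) : x = y := by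
  ext j
  refine Fin.lastCases ?_ ?_ j
  · exact hl
  · intro i
    have h2 := congrArg (fun v => v i) h
    rw [projMap_apply, projMap_apply, hl] at h2
    linarith

lemma fiber_segment (e : ℕ) (w : Fin e → ℝ)
    {x y z : EuclideanSpace ℝ (Fin (e + 1))}
    (hxy : projMap e w x = projMap e w y) (hxz : projMap e w x = projMap e w z)
    (h1 : x (Fin.last e) ≤ z (Fin.last e)) (h2 : z (Fin.last e) ≤ y (Fin.last e)) :
    z ∈ segment ℝ x y := by
  rcases eq_or_lt_of_le (h1.trans h2) with h0 | h0
  · have hz : z = x := proj_eq_last e w hxz.symm (by linarith)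
    exact hz ▸ left_mem_segment ℝ x y
  · set tx := x (Fin.last e) with htx
    set ty := y (Fin.last e) with hty
    set tz := z (Fin.last e) with htz
    set θ : ℝ := (tz - tx) / (ty - tx) with hθ
    have hne : ty - tx ≠ 0 := by intro h; rw [sub_eq_zero] at h; linarith [h0]
    have hθ1 : θ * (ty - tx) = tz - tx := div_mul_cancel₀ _ hne
    have hθ0 : 0 ≤ θ := div_nonneg (by linarith) (by linarith)
    have hθle : θ ≤ 1 := by
      rw [hθ, div_le_one (by linarith)]; linarith
    refine ⟨1 - θ, θ, by linarith, hθ0, by ring, ?_⟩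
    ext j
    have happ : ((1 - θ) • x + θ • y) j = (1 - θ) * x j + θ * y j := by
      simp [PiLp.add_apply, PiLp.smul_apply]
    rw [happ]
    refine Fin.lastCases ?_ ?_ j
    · show (1 - θ) * tx + θ * ty = tz
      nlinarith [hθ1]
    · intro i
      have hy2 := congrArg (fun v => v i) hxy
      have hz2 := congrArg (fun v => v i) hxz
      rw [projMap_apply, projMap_apply] at hy2 hz2
      have hy' : y i.castSucc - x i.castSucc = w i * (ty - tx) := by
        simp only [← htx, ← hty] at hy2 ⊢; ring_nf; linarith [hy2]
      have hz' : z i.castSucc - x i.castSucc = w i * (tz - tx) := by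
        simp only [← htx, ← htz] at hz2 ⊢; ring_nf; linarith [hz2]
      have key : θ * (y i.castSucc - x i.castSucc) = w i * (tz - tx) := by
        rw [hy', show θ * (w i * (ty - tx)) = w i * (θ * (ty - tx)) by ring, hθ1]
      linarith [key, hz']

/-- `x` has Tverberg depth `r` with respect to the finite set `Q ⊆ ℝ^m`. -/
def HasTverbergDepth {m : ℕ} (Q : Finset (EuclideanSpace ℝ (Fin m)))
    (x : EuclideanSpace ℝ (Fin m)) (r : ℕ) : Prop :=
  ∃ f : Fin r → Finset (EuclideanSpace ℝ (Fin m)),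
    (∀ i, (f i).Nonempty) ∧
    (∀ i j, i ≠ j → Disjoint (f i) (f j)) ∧
    (∀ p ∈ Q, ∃ i, p ∈ f i) ∧ (∀ i, f i ⊆ Q) ∧
    ∀ i, x ∈ convexHull ℝ ((f i : Set (EuclideanSpace ℝ (Fin m))))

/-- Inductive step of the simple algorithm: if every point set in `ℝ^{d-1}` has a
Tverberg point of depth `⌈n/2^{d-1}⌉`, then every `n`-point set in `ℝ^d` has a
Tverberg point of depth at least `⌈n/2^d⌉`. -/
theorem simple_algorithm_step (d : ℕ) (hd : 2 ≤ d)
    (hyp : ∀ Q : Finset (EuclideanSpace ℝ (Fin (d - 1))),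
      ∃ c', HasTverbergDepth Q c' ((Q.card + 2 ^ (d - 1) - 1) / 2 ^ (d - 1)))
    (P : Finset (EuclideanSpace ℝ (Fin d))) :
    ∃ c, HasTverbergDepth P c ((P.card + 2 ^ d - 1) / 2 ^ d) := by
  classical
  have h2d : 0 < 2 ^ d := Nat.pow_pos (by norm_num)
  rcases Nat.eq_zero_or_pos P.card with h0 | h0
  · have hr0 : (P.card + 2 ^ d - 1) / 2 ^ d = 0 := by
      rw [h0]; exact Nat.div_eq_of_lt (by omega)
    have hP : P = ∅ := Finset.card_eq_zero.mp h0
    rw [hr0]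
    exact ⟨0, Fin.elim0, fun i => i.elim0, fun i => i.elim0, by simp [hP],
      fun i => i.elim0, fun i => i.elim0⟩
  obtain ⟨e, rfl⟩ : ∃ e, d = e + 1 := ⟨d - 1, by omega⟩
  have he : 1 ≤ e := by omega
  have hyp' : ∀ Q : Finset (EuclideanSpace ℝ (Fin e)),
      ∃ c', HasTverbergDepth Q c' ((Q.card + 2 ^ e - 1) / 2 ^ e) := hyp
  clear hyp
  -- choose a generic direction w
  have hinf : Infinite (Fin e → ℝ) := by
    have : Nonempty (Fin e) := ⟨⟨0, by omega⟩⟩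
    infer_instance
  set bad : Finset (Fin e → ℝ) :=
    (P ×ˢ P).image (fun pq => fun i =>
      (pq.1 i.castSucc - pq.2 i.castSucc) / (pq.1 (Fin.last e) - pq.2 (Fin.last e))) with hbad
  obtain ⟨w, hw⟩ := Infinite.exists_notMem_finset bad
  -- injectivity of the projection on P
  have hinj : ∀ p ∈ P, ∀ q ∈ P, projMap e w p = projMap e w q → p = q := by
    intro p hp q hq hpq
    by_contra hne
    rcases eq_or_ne (p (Fin.last e)) (q (Fin.last e)) with hl | hl
    · exact hne (proj_eq_last e w hpq hl)
    · apply hw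
      rw [hbad, Finset.mem_image]
      refine ⟨(p, q), Finset.mem_product.mpr ⟨hp, hq⟩, ?_⟩
      funext i
      have h2 := congrArg (fun v => v i) hpq
      rw [projMap_apply, projMap_apply] at h2
      field_simp [sub_ne_zero.mpr hl]
      ring_nf
      ring_nf at h2
      linarith [h2]
  -- project P
  set π := projMap e w with hπ
  set Q : Finset (EuclideanSpace ℝ (Fin e)) := P.image π with hQ
  have hQcard : Q.card = P.card := Finset.card_image_of_injOn hinj
  set r' := (Q.card + 2 ^ e - 1) / 2 ^ e with hr'def
  set r := (P.card + 2 ^ (e + 1) - 1) / 2 ^ (e + 1) with hrdef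
  obtain ⟨c', g, hgne, hgdisj, hgcover, hgsub, hgconv⟩ := hyp' Q
  -- arithmetic
  have h2e : 0 < 2 ^ e := Nat.pow_pos (by norm_num)
  have hr'm : r' = (P.card - 1) / 2 ^ e + 1 := by
    rw [hr'def, hQcard, show P.card + 2 ^ e - 1 = (P.card - 1) + 2 ^ e by omega,
      Nat.add_div_right _ h2e]
  have hrm : r = (P.card - 1) / 2 ^ e / 2 + 1 := by
    rw [hrdef, show P.card + 2 ^ (e + 1) - 1 = (P.card - 1) + 2 ^ (e + 1) by
        have : 0 < 2 ^ (e + 1) := Nat.pow_pos (by norm_num); omega,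
      Nat.add_div_right _ (Nat.pow_pos (by norm_num)),
      pow_succ, ← Nat.div_div_eq_div_mul]
  have harith : 1 ≤ r ∧ r ≤ r' ∧ r' ≤ 2 * r ∧ 2 * r - 1 ≤ r' := by
    generalize (P.card - 1) / 2 ^ e = M at hr'm hrm
    omega
  obtain ⟨hr1, hrr', hr'2r, h2rr'⟩ := harith
  -- parts: preimages of the g i
  set part : Fin r' → Finset (EuclideanSpace ℝ (Fin (e + 1))) :=
    fun i => P.filter (fun p => π p ∈ g i) with hpart
  have hpart_ne : ∀ i, (part i).Nonempty := by
    intro i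
    obtain ⟨q, hq⟩ := hgne i
    have hqQ : q ∈ Q := hgsub i hq
    rw [hQ, Finset.mem_image] at hqQ
    obtain ⟨p, hp, hpq⟩ := hqQ
    exact ⟨p, Finset.mem_filter.mpr ⟨hp, by rw [hpq]; exact hq⟩⟩
  have hpart_disj : ∀ a b : Fin r', a ≠ b → Disjoint (part a) (part b) := by
    intro a b hab
    rw [Finset.disjoint_left]
    intro p hpa hpb
    exact (Finset.disjoint_left.mp (hgdisj a b hab)) (Finset.mem_filter.mp hpa).2
      (Finset.mem_filter.mp hpb).2
  -- choose a point over c' in each part's hull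
  have hx : ∀ i : Fin r', ∃ x, x ∈ convexHull ℝ (part i : Set _) ∧ π x = c' := by
    intro i
    have hsub2 : (g i : Set _) ⊆ π '' (part i : Set _) := by
      intro q hq
      have hqQ : q ∈ Q := hgsub i hq
      rw [hQ, Finset.mem_image] at hqQ
      obtain ⟨p, hp, hpq⟩ := hqQ
      exact ⟨p, Finset.mem_coe.mpr (Finset.mem_filter.mpr ⟨hp, by rw [hpq]; exact hq⟩), hpq⟩
    have hmem := convexHull_mono hsub2 (hgconv i)
    rw [← LinearMap.image_convexHull] at hmem
    obtain ⟨xx, hxx, hxx2⟩ := hmem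
    exact ⟨xx, hxx, hxx2⟩
  choose x hxconv hxproj using hx
  set t : Fin r' → ℝ := fun i => x i (Fin.last e) with ht
  set σ := Tuple.sort t with hσ
  have hmono : Monotone (t ∘ σ) := Tuple.monotone_sort t
  have hdiff : ∀ a b : Fin r', (a : ℕ) ≠ (b : ℕ) → σ a ≠ σ b :=
    fun a b h hc => h (congrArg Fin.val (σ.injective hc))
  set i₁ : Fin r → Fin r' := fun mm => ⟨mm, lt_of_lt_of_le mm.2 hrr'⟩ with hi₁
  set i₂ : Fin r → Fin r' := fun mm => ⟨r' - 1 - mm, by omega⟩ with hi₂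
  set kidx : Fin r' := ⟨r - 1, by omega⟩ with hkidx
  refine ⟨x (σ kidx), fun mm => part (σ (i₁ mm)) ∪ part (σ (i₂ mm)), ?_, ?_, ?_, ?_, ?_⟩
  · intro mm
    exact (hpart_ne (σ (i₁ mm))).mono Finset.subset_union_left
  · intro m1 m2 h12
    have hv : (m1 : ℕ) ≠ (m2 : ℕ) := fun hc => h12 (Fin.ext hc)
    have hm1 := m1.2
    have hm2 := m2.2
    simp only [Finset.disjoint_union_left, Finset.disjoint_union_right]
    refine ⟨⟨hpart_disj _ _ (hdiff _ _ ?_), hpart_disj _ _ (hdiff _ _ ?_)⟩,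
      hpart_disj _ _ (hdiff _ _ ?_), hpart_disj _ _ (hdiff _ _ ?_)⟩ <;>
      simp only [hi₁, hi₂] <;> omega
  · intro p hp
    have hpQ : π p ∈ Q := Finset.mem_image_of_mem π hp
    obtain ⟨j, hj⟩ := hgcover _ hpQ
    have hσi : σ (σ.symm j) = j := σ.apply_symm_apply j
    have hib := (σ.symm j).2
    by_cases hcase : ((σ.symm j : Fin r') : ℕ) < r
    · refine ⟨⟨(σ.symm j : Fin r'), hcase⟩, Finset.mem_union_left _ ?_⟩
      have hieq : i₁ ⟨(σ.symm j : Fin r'), hcase⟩ = σ.symm j := Fin.ext rfl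
      rw [hieq, hσi]
      exact Finset.mem_filter.mpr ⟨hp, hj⟩
    · refine ⟨⟨r' - 1 - (σ.symm j : Fin r'), by omega⟩, Finset.mem_union_right _ ?_⟩
      have hieq : i₂ ⟨r' - 1 - ((σ.symm j : Fin r') : ℕ), by omega⟩ = σ.symm j :=
        Fin.ext (by simp only [hi₂]; omega)
      rw [hieq, hσi]
      exact Finset.mem_filter.mpr ⟨hp, hj⟩
  · intro mm
    exact Finset.union_subset (Finset.filter_subset _ _) (Finset.filter_subset _ _)
  · intro mm
    have hm := mm.2
    have h1 : x (σ (i₁ mm)) ∈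
        convexHull ℝ ((part (σ (i₁ mm)) ∪ part (σ (i₂ mm)) : Finset _) : Set _) :=
      convexHull_mono (by rw [Finset.coe_union]; exact Set.subset_union_left) (hxconv _)
    have h2 : x (σ (i₂ mm)) ∈
        convexHull ℝ ((part (σ (i₁ mm)) ∪ part (σ (i₂ mm)) : Finset _) : Set _) :=
      convexHull_mono (by rw [Finset.coe_union]; exact Set.subset_union_right) (hxconv _)
    have hseg : x (σ kidx) ∈ segment ℝ (x (σ (i₁ mm))) (x (σ (i₂ mm))) := by
      apply fiber_segment e w
      · rw [show projMap e w (x (σ (i₁ mm))) = c' from hxproj _,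
          show projMap e w (x (σ (i₂ mm))) = c' from hxproj _]
      · rw [show projMap e w (x (σ (i₁ mm))) = c' from hxproj _,
          show projMap e w (x (σ kidx)) = c' from hxproj _]
      · exact hmono (show i₁ mm ≤ kidx by
          rw [hi₁, hkidx, Fin.mk_le_mk]; omega)
      · exact hmono (show kidx ≤ i₂ mm by
          rw [hi₂, hkidx, Fin.mk_le_mk]; omega)
    exact (convex_convexHull ℝ _).segment_subset h1 h2 hseg
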